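/- arXiv:1709.08045 — 2 statements merged into one kernel-verified Lean document; each statement's English description precedes it below -/
import Mathlib

section
/- Let m ≥ 1, κ = (κ_1 ≥ … ≥ κ_m ≥ 0) a partition, and x a real symmetric positive semidefinite m×m matrix. If rank(x) = k and the length l(κ) = k, then Φ_κ(x) = ∫_{O(m)} Δ_κ(u x uᵀ) du > 0. -/
open MeasureTheory Matrix

noncomputable instance matrixMeasurableSpace {k l α : Type*} [MeasurableSpace α] :
    MeasurableSpace (Matrix k l α) :=
  inferInstanceAs (MeasurableSpace (k → l → α))

/-- The `i`-th leading principal minor of an `m×m` matrix (`i ≤ m`). -/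
noncomputable def leadingMinor {m : ℕ} (x : Matrix (Fin m) (Fin m) ℝ) (i : ℕ) (h : i ≤ m) : ℝ :=
  (x.submatrix (Fin.castLE h) (Fin.castLE h)).det

/-- The generalized power `Δ_κ(x) = ∏_{i=1}^m Δ_i(x)^(κ_i − κ_{i+1})` (`κ_{m+1} := 0`),
with the partition `κ` indexed by `Fin m` (so `κ j` is the part `κ_{j+1}`). -/
noncomputable def DeltaKappa {m : ℕ} (κ : Fin m → ℕ) (x : Matrix (Fin m) (Fin m) ℝ) : ℝ :=
  ∏ i : Fin m, leadingMinor x ((i : ℕ) + 1) i.isLt ^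
    (κ i - if h : (i : ℕ) + 1 < m then κ ⟨(i : ℕ) + 1, h⟩ else 0)

/-- `μ` is the normalized Haar measure on the orthogonal group `O(m)`: a left-translation
invariant Borel probability measure (such a measure is unique on the compact group `O(m)`). -/
def IsHaarO (m : ℕ) (μ : Measure (Matrix.orthogonalGroup (Fin m) ℝ)) : Prop :=
  IsProbabilityMeasure μ ∧
    ∀ v : Matrix.orthogonalGroup (Fin m) ℝ, μ.map (fun u => v * u) = μ

/-- The spherical polynomial `Φ_κ(x) = ∫_{O(m)} Δ_κ(u x uᵀ) du`, relative to the normalized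
Haar measure `μ` on `O(m)`. -/
noncomputable def PhiK {m : ℕ} (μ : Measure (Matrix.orthogonalGroup (Fin m) ℝ))
    (κ : Fin m → ℕ) (x : Matrix (Fin m) (Fin m) ℝ) : ℝ :=
  ∫ u, DeltaKappa κ
    ((u : Matrix (Fin m) (Fin m) ℝ) * x * (u : Matrix (Fin m) (Fin m) ℝ)ᵀ) ∂μ

/- ### Auxiliary instances and lemmas -/

instance matrixBorelSpace {k l : Type*} [Countable k] [Countable l] :
    BorelSpace (Matrix k l ℝ) :=
  inferInstanceAs (BorelSpace (k → l → ℝ))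

instance orthBorelSpace (m : ℕ) : BorelSpace (Matrix.orthogonalGroup (Fin m) ℝ) :=
  inferInstanceAs (BorelSpace
    {x : Matrix (Fin m) (Fin m) ℝ // x ∈ (Matrix.orthogonalGroup (Fin m) ℝ : Set _)})

lemma orth_set_eq (m : ℕ) :
    (Matrix.orthogonalGroup (Fin m) ℝ : Set (Matrix (Fin m) (Fin m) ℝ)) =
      {A | A * star A = 1} := by
  ext A
  exact Matrix.mem_orthogonalGroup_iff _ _

instance orthCompact (m : ℕ) : CompactSpace (Matrix.orthogonalGroup (Fin m) ℝ) := by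
  suffices h : IsCompact (Matrix.orthogonalGroup (Fin m) ℝ : Set (Matrix (Fin m) (Fin m) ℝ)) by
    exact isCompact_iff_compactSpace.mp h
  have hclosed : IsClosed (Matrix.orthogonalGroup (Fin m) ℝ :
      Set (Matrix (Fin m) (Fin m) ℝ)) := by
    rw [orth_set_eq]
    exact isClosed_eq (continuous_id.matrix_mul continuous_id.matrix_conjTranspose)
      continuous_const
  have hKc : IsCompact (Set.pi Set.univ
      (fun _ : Fin m => Set.pi Set.univ fun _ : Fin m => Set.Icc (-1 : ℝ) 1) :
      Set (Matrix (Fin m) (Fin m) ℝ)) :=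
    isCompact_univ_pi fun i => isCompact_univ_pi fun j => isCompact_Icc
  refine hKc.of_isClosed_subset hclosed ?_
  intro A hA
  rw [orth_set_eq] at hA
  rw [Set.mem_pi]
  intro i _
  rw [Set.mem_pi]
  intro j _
  have hdiag : ∑ l, A i l * A i l = 1 := by
    have := congrArg (fun M : Matrix (Fin m) (Fin m) ℝ => M i i) hA
    erw [Matrix.mul_apply] at this
    exact (Finset.sum_congr rfl fun l _ => rfl).trans (this.trans (by simp [Matrix.one_apply]))
  have hsq : A i j * A i j ≤ 1 := by
    rw [← hdiag]
    exact Finset.single_le_sum (fun l _ => mul_self_nonneg (A i l)) (Finset.mem_univ j)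
  constructor <;> nlinarith

lemma orth_continuous_mul_left {m : ℕ} (v : Matrix.orthogonalGroup (Fin m) ℝ) :
    Continuous fun u : Matrix.orthogonalGroup (Fin m) ℝ => v * u := by
  apply Continuous.subtype_mk
    (f := fun u : Matrix.orthogonalGroup (Fin m) ℝ =>
      (v : Matrix (Fin m) (Fin m) ℝ) * (u : Matrix (Fin m) (Fin m) ℝ))
  exact continuous_const.matrix_mul continuous_subtype_val

/-- A left-invariant probability measure on `O(m)` is positive on nonempty open sets. -/
lemma haar_open_pos {m : ℕ} {μ : Measure (Matrix.orthogonalGroup (Fin m) ℝ)}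
    (hμ : IsHaarO m μ) {U : Set (Matrix.orthogonalGroup (Fin m) ℝ)}
    (hU : IsOpen U) (hne : U.Nonempty) : 0 < μ U := by
  obtain ⟨u₀, hu₀⟩ := hne
  rcases hμ with ⟨hprob, hinv⟩
  rw [pos_iff_ne_zero]
  intro h0
  have hcover : (Set.univ : Set (Matrix.orthogonalGroup (Fin m) ℝ)) ⊆
      ⋃ v : Matrix.orthogonalGroup (Fin m) ℝ, (fun u => v * u) ⁻¹' U := by
    intro h _
    refine Set.mem_iUnion.2 ⟨u₀ * h⁻¹, ?_⟩
    simp [hu₀]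
  obtain ⟨t, ht⟩ := isCompact_univ.elim_finite_subcover
    (fun v : Matrix.orthogonalGroup (Fin m) ℝ => (fun u => v * u) ⁻¹' U)
    (fun v => hU.preimage (orth_continuous_mul_left v)) hcover
  have hμv : ∀ v : Matrix.orthogonalGroup (Fin m) ℝ, μ ((fun u => v * u) ⁻¹' U) = 0 := by
    intro v
    have := hinv v
    calc μ ((fun u => v * u) ⁻¹' U)
        = (μ.map (fun u => v * u)) U := by
          rw [Measure.map_apply ((orth_continuous_mul_left v).measurable) hU.measurableSet]
      _ = μ U := by rw [this]
      _ = 0 := h0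
  have h1 : μ (Set.univ : Set (Matrix.orthogonalGroup (Fin m) ℝ)) = 1 := measure_univ
  have : μ (Set.univ : Set (Matrix.orthogonalGroup (Fin m) ℝ)) ≤
      ∑ v ∈ t, μ ((fun u => v * u) ⁻¹' U) :=
    le_trans (measure_mono ht) (measure_biUnion_finset_le t _)
  simp [hμv, h1] at this

lemma posSemidef_det_nonneg {n : Type*} [Fintype n] [DecidableEq n]
    {A : Matrix n n ℝ} (hA : A.PosSemidef) : 0 ≤ A.det := by
  rw [hA.1.det_eq_prod_eigenvalues]
  exact Finset.prod_nonneg fun i _ => by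
    simpa using hA.eigenvalues_nonneg i

lemma deltaKappa_nonneg {m : ℕ} (κ : Fin m → ℕ) {y : Matrix (Fin m) (Fin m) ℝ}
    (hy : y.PosSemidef) : 0 ≤ DeltaKappa κ y := by
  refine Finset.prod_nonneg fun i _ => pow_nonneg ?_ _
  exact posSemidef_det_nonneg (hy.submatrix _)

lemma continuous_integrand {m : ℕ} (κ : Fin m → ℕ) (x : Matrix (Fin m) (Fin m) ℝ) :
    Continuous fun u : Matrix.orthogonalGroup (Fin m) ℝ =>
      DeltaKappa κ ((u : Matrix (Fin m) (Fin m) ℝ) * x * (u : Matrix (Fin m) (Fin m) ℝ)ᵀ) := by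
  unfold DeltaKappa leadingMinor
  apply continuous_finset_prod
  intro i _
  apply Continuous.pow
  apply Continuous.matrix_det
  apply Continuous.matrix_submatrix
  exact (continuous_subtype_val.matrix_mul continuous_const).matrix_mul
    continuous_subtype_val.matrix_transpose

/-- There exists an orthogonal matrix making `uxuᵀ` diagonal with positive leading entries,
on which `Δ_κ` is positive. -/
lemma exists_good_u {m : ℕ} (κ : Fin m → ℕ)
    (x : Matrix (Fin m) (Fin m) ℝ) (hx : x.PosSemidef)
    (k : ℕ) (hrank : x.rank = k) (hlen : ∀ i : Fin m, (i : ℕ) < k ↔ κ i ≠ 0) :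
    ∃ u₀ ∈ Matrix.orthogonalGroup (Fin m) ℝ, 0 < DeltaKappa κ (u₀ * x * u₀ᵀ) := by
  classical
  have hH := hx.1
  set d : Fin m → ℝ := hH.eigenvalues with hd
  set V : Matrix (Fin m) (Fin m) ℝ := (hH.eigenvectorUnitary : Matrix (Fin m) (Fin m) ℝ) with hVdef
  have hVmem : V ∈ Matrix.unitaryGroup (Fin m) ℝ := (hH.eigenvectorUnitary).2
  have hWV : star V * V = 1 := (Matrix.mem_unitaryGroup_iff').mp hVmem
  have hxeq : x = V * diagonal d * star V := by
    have := hH.spectral_theorem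
    simpa using this
  have hdnn : ∀ i, 0 ≤ d i := fun i => hx.eigenvalues_nonneg i
  set σ : Equiv.Perm (Fin m) := Tuple.sort (fun i => -(d i)) with hσ
  set dd : Fin m → ℝ := fun j => d (σ j) with hdd
  have anti : Antitone dd := by
    intro i j hij
    have := Tuple.monotone_sort (fun i => -(d i)) hij
    simpa [hdd] using this
  have hcard : Fintype.card {i : Fin m // d i ≠ 0} = k := by
    rw [← hH.rank_eq_card_non_zero_eigs]; exact hrank
  have hcard' : Fintype.card {j : Fin m // dd j ≠ 0} = k := by
    rw [← hcard]
    exact Fintype.card_congr (Equiv.subtypeEquiv σ fun j => Iff.rfl)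
  have hddpos : ∀ j : Fin m, (j : ℕ) < k → 0 < dd j := by
    intro j hj
    rcases (hdnn (σ j)).lt_or_eq with h | h
    · exact h
    · exfalso
      have hj0 : dd j = 0 := h.symm
      have hzero : ∀ j' : Fin m, j ≤ j' → dd j' = 0 := fun j' hle =>
        le_antisymm (hj0 ▸ anti hle) (hdnn _)
      have hlt : ∀ p : {j' : Fin m // dd j' ≠ 0}, ((p.1 : Fin m) : ℕ) < (j : ℕ) := by
        intro p
        by_contra hge
        push_neg at hge
        exact p.2 (hzero p.1 (by exact Fin.le_def.mpr hge))
      have hinj : Fintype.card {j' : Fin m // dd j' ≠ 0} ≤ (j : ℕ) := by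
        have := Fintype.card_le_of_injective
          (fun p : {j' : Fin m // dd j' ≠ 0} => (⟨(p.1 : ℕ), hlt p⟩ : Fin (j : ℕ)))
          (fun a b hab => Subtype.ext (Fin.ext (by
            simpa using congrArg Fin.val hab)))
        simpa using this
      rw [hcard'] at hinj
      omega
  refine ⟨(star V).submatrix ⇑σ id, ?_, ?_⟩
  · rw [Matrix.mem_orthogonalGroup_iff]
    simp only [Matrix.star_eq_conjTranspose, Matrix.conjTranspose_eq_transpose_of_trivial,
      Matrix.transpose_submatrix, Matrix.transpose_transpose]
    have hsm := Matrix.submatrix_mul Vᵀ V ⇑σ (id : Fin m → Fin m) ⇑σ Function.bijective_id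
    rw [← hsm]
    have h1 : Vᵀ * V = 1 := by
      rw [← Matrix.conjTranspose_eq_transpose_of_trivial, ← Matrix.star_eq_conjTranspose]
      exact hWV
    rw [h1, Matrix.submatrix_one_equiv]
  · have hdiag : (star V).submatrix ⇑σ id * x * ((star V).submatrix ⇑σ id)ᵀ
        = diagonal dd := by
      have hT : ((star V).submatrix ⇑σ id)ᵀ = (star V)ᵀ.submatrix id ⇑σ :=
        Matrix.transpose_submatrix _ _ _
      rw [hT]
      have key : (star V).submatrix ⇑σ id * x = ((star V) * x).submatrix ⇑σ id := by
        have := Matrix.submatrix_mul (star V) x ⇑σ (id : Fin m → Fin m)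
          (id : Fin m → Fin m) Function.bijective_id
        simpa using this.symm
      rw [key]
      have key2 : ((star V) * x).submatrix ⇑σ id * (star V)ᵀ.submatrix id ⇑σ
          = ((star V) * x * (star V)ᵀ).submatrix ⇑σ ⇑σ := by
        have := Matrix.submatrix_mul ((star V) * x) (star V)ᵀ ⇑σ (id : Fin m → Fin m)
          ⇑σ Function.bijective_id
        simpa using this.symm
      rw [key2]
      have hmid : (star V) * x * (star V)ᵀ = diagonal d := by
        have hVs : (star V)ᵀ = V := by
          rw [Matrix.star_eq_conjTranspose, Matrix.conjTranspose_eq_transpose_of_trivial,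
            Matrix.transpose_transpose]
        rw [hVs, hxeq]
        simp only [Matrix.mul_assoc]
        rw [hWV, Matrix.mul_one, ← Matrix.mul_assoc, hWV, Matrix.one_mul]
      rw [hmid, Matrix.submatrix_diagonal d ⇑σ σ.injective]
      rfl
    rw [hdiag]
    unfold DeltaKappa
    apply Finset.prod_pos
    intro i _
    rcases Nat.eq_zero_or_pos (κ i - if h : (i : ℕ) + 1 < m then κ ⟨(i : ℕ) + 1, h⟩ else 0)
      with he | he
    · rw [he, pow_zero]; exact one_pos
    · apply pow_pos
      have hκi : κ i ≠ 0 := fun h0 => by simp [h0] at he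
      have hik : (i : ℕ) < k := (hlen i).mpr hκi
      unfold leadingMinor
      rw [Matrix.submatrix_diagonal _ _ (Fin.castLE_injective _), Matrix.det_diagonal]
      apply Finset.prod_pos
      intro j _
      apply hddpos
      have : ((Fin.castLE i.isLt j : Fin m) : ℕ) = (j : ℕ) := rfl
      rw [this]
      have := j.isLt
      omega

/-- Strict positivity of spherical polynomials: if `x` is positive semidefinite with
`rank x = k` and the partition `κ` has length `l(κ) = k` (its first `k` parts are nonzero and
the rest vanish), then `Φ_κ(x) > 0`. -/
theorem sphericalPoly_pos
    (m : ℕ) (hm : 1 ≤ m) (κ : Fin m → ℕ) (hκ : Antitone κ)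
    (μ : Measure (Matrix.orthogonalGroup (Fin m) ℝ)) (hμ : IsHaarO m μ)
    (x : Matrix (Fin m) (Fin m) ℝ) (hx : x.PosSemidef)
    (k : ℕ) (hrank : x.rank = k) (hlen : ∀ i : Fin m, (i : ℕ) < k ↔ κ i ≠ 0) :
    0 < PhiK μ κ x := by
  haveI : IsProbabilityMeasure μ := hμ.1
  set f : Matrix.orthogonalGroup (Fin m) ℝ → ℝ := fun u =>
    DeltaKappa κ ((u : Matrix (Fin m) (Fin m) ℝ) * x * (u : Matrix (Fin m) (Fin m) ℝ)ᵀ)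
    with hf_def
  have hf_cont : Continuous f := continuous_integrand κ x
  have hf_nonneg : 0 ≤ f := by
    intro u
    apply deltaKappa_nonneg
    have := hx.mul_mul_conjTranspose_same (u : Matrix (Fin m) (Fin m) ℝ)
    rwa [Matrix.conjTranspose_eq_transpose_of_trivial] at this
  have hf_int : Integrable f μ :=
    hf_cont.integrable_of_hasCompactSupport (HasCompactSupport.of_compactSpace f)
  rw [PhiK, ← hf_def, integral_pos_iff_support_of_nonneg hf_nonneg hf_int]
  obtain ⟨u₀, hu₀mem, hu₀⟩ := exists_good_u κ x hx k hrank hlen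
  have hUopen : IsOpen (f ⁻¹' Set.Ioi 0) := hf_cont.isOpen_preimage _ isOpen_Ioi
  have hUne : (f ⁻¹' Set.Ioi 0).Nonempty := ⟨⟨u₀, hu₀mem⟩, by simpa [hf_def] using hu₀⟩
  calc (0 : ENNReal) < μ (f ⁻¹' Set.Ioi 0) := haar_open_pos hμ hUopen hUne
    _ ≤ μ (Function.support f) :=
      measure_mono fun u hu => ne_of_gt (Set.mem_preimage.1 hu)
end

section
/- Let μ be a probability measure on [0,∞), let 0 ≤ s₀ < s₁, and let h be a real-analytic function on (−∞, s₁). Suppose that for every s < s₀ the function x ↦ e^{sx} is μ-integrable and ∫_{[0,∞)} e^{sx} μ(dx) = h(s). Then for every s < s₁ the function x ↦ e^{sx} is μ-integrable and ∫_{[0,∞)} e^{sx} μ(dx) = h(s). -/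
open MeasureTheory
open scoped ENNReal NNReal

lemma real_exp_tsum (y : ℝ) : Real.exp y = ∑' n : ℕ, y ^ n / n.factorial := by
  rw [Real.exp_eq_exp_ℝ, NormedSpace.exp_eq_tsum_div]

lemma exp_ofReal_tsum {x t s : ℝ} (hx : 0 ≤ x) (hts : t ≤ s) :
    ENNReal.ofReal (Real.exp (s * x)) =
      ∑' n : ℕ, ENNReal.ofReal ((s - t) ^ n / n.factorial) *
        ENNReal.ofReal (x ^ n * Real.exp (t * x)) := by
  have hst : (0:ℝ) ≤ s - t := sub_nonneg.2 hts
  have hsum : Summable (fun n : ℕ => ((s - t) * x) ^ n / n.factorial * Real.exp (t * x)) :=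
    (Real.summable_pow_div_factorial ((s - t) * x)).mul_right _
  have key : ∀ n : ℕ, (s - t) ^ n / n.factorial * (x ^ n * Real.exp (t * x))
      = ((s - t) * x) ^ n / n.factorial * Real.exp (t * x) := by
    intro n; rw [mul_pow]; ring
  calc ENNReal.ofReal (Real.exp (s * x))
      = ENNReal.ofReal (∑' n : ℕ, ((s - t) * x) ^ n / n.factorial * Real.exp (t * x)) := by
        rw [tsum_mul_right, ← real_exp_tsum, ← Real.exp_add]
        ring_nf
    _ = ∑' n : ℕ, ENNReal.ofReal (((s - t) * x) ^ n / n.factorial * Real.exp (t * x)) := by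
        refine ENNReal.ofReal_tsum_of_nonneg (fun n => ?_) hsum
        positivity
    _ = _ := by
        refine tsum_congr fun n => ?_
        rw [← key n, ENNReal.ofReal_mul (by positivity)]

lemma meas_aux (t : ℝ) (n : ℕ) :
    Measurable fun x : ℝ => ENNReal.ofReal (x ^ n * Real.exp (t * x)) := by
  apply ENNReal.measurable_ofReal.comp
  exact (measurable_id.pow_const n).mul ((measurable_const.mul measurable_id).exp)

/-- key lintegral identity -/
lemma key_lintegral (μ : Measure ℝ) (hsupp : ∀ᵐ x ∂μ, 0 ≤ x) {t s : ℝ} (hts : t ≤ s) :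
    ∫⁻ x, ENNReal.ofReal (Real.exp (s * x)) ∂μ =
      ∑' n : ℕ, ENNReal.ofReal ((s - t) ^ n / n.factorial) *
        ∫⁻ x, ENNReal.ofReal (x ^ n * Real.exp (t * x)) ∂μ := by
  have h1 : ∫⁻ x, ENNReal.ofReal (Real.exp (s * x)) ∂μ
      = ∫⁻ x, ∑' n : ℕ, ENNReal.ofReal ((s - t) ^ n / n.factorial) *
          ENNReal.ofReal (x ^ n * Real.exp (t * x)) ∂μ := by
    refine lintegral_congr_ae ?_
    filter_upwards [hsupp] with x hx
    exact exp_ofReal_tsum hx hts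
  rw [h1, lintegral_tsum]
  · refine tsum_congr fun n => ?_
    rw [lintegral_const_mul _ (meas_aux t n)]
  · exact fun n => (measurable_const.mul (meas_aux t n)).aemeasurable

/-- pointwise moment bound -/
lemma moment_ptwise {x t u : ℝ} (hx : 0 ≤ x) (htu : t < u) (n : ℕ) :
    x ^ n * Real.exp (t * x) ≤ (n.factorial / (u - t) ^ n) * Real.exp (u * x) := by
  have h0 : (0:ℝ) < u - t := sub_pos.2 htu
  have h1 : ((u - t) * x) ^ n / n.factorial ≤ Real.exp ((u - t) * x) :=
    Real.pow_div_factorial_le_exp ((u - t) * x) (by positivity) n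
  have h2 : ((u - t) * x) ^ n / n.factorial * Real.exp (t * x)
      ≤ Real.exp ((u - t) * x) * Real.exp (t * x) :=
    mul_le_mul_of_nonneg_right h1 (Real.exp_pos _).le
  have h3 : Real.exp ((u - t) * x) * Real.exp (t * x) = Real.exp (u * x) := by
    rw [← Real.exp_add]; ring_nf
  rw [h3] at h2
  have h4 : x ^ n * Real.exp (t * x)
      = (n.factorial / (u - t) ^ n) * (((u - t) * x) ^ n / n.factorial * Real.exp (t * x)) := by
    have hne : ((u - t):ℝ) ^ n ≠ 0 := by positivity
    have hfac : ((n.factorial : ℝ)) ≠ 0 := by positivity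
    rw [mul_pow]
    field_simp
  rw [h4]
  calc (n.factorial / (u - t) ^ n : ℝ) * (((u - t) * x) ^ n / n.factorial * Real.exp (t * x))
      ≤ (n.factorial / (u - t) ^ n) * Real.exp (u * x) := by
        apply mul_le_mul_of_nonneg_left h2 (by positivity)

/-- B finite -/
lemma moment_lintegral_lt_top (μ : Measure ℝ) (hsupp : ∀ᵐ x ∂μ, 0 ≤ x) {t u : ℝ} (htu : t < u)
    (hu : ∫⁻ x, ENNReal.ofReal (Real.exp (u * x)) ∂μ ≠ ⊤) (n : ℕ) :
    ∫⁻ x, ENNReal.ofReal (x ^ n * Real.exp (t * x)) ∂μ ≠ ⊤ := by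
  have hb : ∫⁻ x, ENNReal.ofReal (x ^ n * Real.exp (t * x)) ∂μ
      ≤ ∫⁻ x, ENNReal.ofReal ((n.factorial / (u - t) ^ n) * Real.exp (u * x)) ∂μ := by
    refine lintegral_mono_ae ?_
    filter_upwards [hsupp] with x hx
    exact ENNReal.ofReal_le_ofReal (moment_ptwise hx htu n)
  refine ne_top_of_le_ne_top ?_ hb
  rw [show (fun x : ℝ => ENNReal.ofReal ((n.factorial / (u - t) ^ n) * Real.exp (u * x)))
      = fun x : ℝ => ENNReal.ofReal (n.factorial / (u - t) ^ n) * ENNReal.ofReal (Real.exp (u * x))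
      from funext fun x => ENNReal.ofReal_mul
        (div_nonneg (Nat.cast_nonneg _) (pow_nonneg (sub_pos.2 htu).le _))]
  rw [lintegral_const_mul _ (by
    exact ENNReal.measurable_ofReal.comp ((measurable_const.mul measurable_id).exp))]
  exact ENNReal.mul_ne_top ENNReal.ofReal_ne_top hu

lemma integrable_exp_iff (μ : Measure ℝ) (s : ℝ) :
    Integrable (fun x => Real.exp (s * x)) μ ↔
      ∫⁻ x, ENNReal.ofReal (Real.exp (s * x)) ∂μ ≠ ⊤ := by
  have hm : AEStronglyMeasurable (fun x : ℝ => Real.exp (s * x)) μ :=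
    ((measurable_const.mul measurable_id).exp).aestronglyMeasurable
  have h2 : Integrable (fun x => Real.exp (s * x)) μ ↔
      HasFiniteIntegral (fun x => Real.exp (s * x)) μ := ⟨fun h => h.2, fun h => ⟨hm, h⟩⟩
  rw [h2]
  unfold HasFiniteIntegral
  simp_rw [show ∀ x : ℝ, ‖Real.exp (s * x)‖ₑ = ENNReal.ofReal (Real.exp (s * x))
    from fun x => Real.enorm_eq_ofReal (Real.exp_pos _).le]
  exact lt_top_iff_ne_top

lemma integral_exp_eq (μ : Measure ℝ) (s : ℝ) :
    ∫ x, Real.exp (s * x) ∂μ = (∫⁻ x, ENNReal.ofReal (Real.exp (s * x)) ∂μ).toReal := by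
  rw [integral_eq_lintegral_of_nonneg_ae]
  · exact Filter.Eventually.of_forall fun x => (Real.exp_pos _).le
  · exact ((measurable_const.mul measurable_id).exp).aestronglyMeasurable

lemma summable_of_tsum_ofReal_ne_top {f : ℕ → ℝ} (hf : ∀ n, 0 ≤ f n)
    (hT : ∑' n, ENNReal.ofReal (f n) ≠ ⊤) : Summable f := by
  have h1 := ENNReal.summable_toReal hT
  refine h1.congr fun n => ?_
  exact ENNReal.toReal_ofReal (hf n)

lemma tsum_eq_toReal_tsum_ofReal {f : ℕ → ℝ} (hf : ∀ n, 0 ≤ f n) :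
    ∑' n, f n = (∑' n, ENNReal.ofReal (f n)).toReal := by
  rw [ENNReal.tsum_toReal_eq (fun n => ENNReal.ofReal_ne_top)]
  exact tsum_congr fun n => (ENNReal.toReal_ofReal (hf n)).symm
lemma key2 (μ : Measure ℝ) (hsupp : ∀ᵐ x ∂μ, 0 ≤ x) {t s : ℝ} (hts : t ≤ s)
    (hB : ∀ n : ℕ, (∫⁻ x, ENNReal.ofReal (x ^ n * Real.exp (t * x)) ∂μ) ≠ ⊤) :
    ∫⁻ x, ENNReal.ofReal (Real.exp (s * x)) ∂μ =
      ∑' n : ℕ, ENNReal.ofReal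
        ((∫⁻ x, ENNReal.ofReal (x ^ n * Real.exp (t * x)) ∂μ).toReal / n.factorial * (s - t) ^ n) := by
  rw [key_lintegral μ hsupp hts]
  refine tsum_congr fun n => ?_
  conv_lhs => rw [← ENNReal.ofReal_toReal (hB n)]
  rw [← ENNReal.ofReal_mul (div_nonneg (pow_nonneg (sub_nonneg.2 hts) n) (Nat.cast_nonneg _))]
  congr 1
  ring

/-- Analytic extension of the moment generating function: if `μ` is a probability measure on
`[0,∞)`, `h` is real-analytic on `(−∞, s₁)`, and `∫ e^{sx} dμ = h(s)` (with integrability) for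
all `s < s₀`, where `0 ≤ s₀ < s₁`, then the same holds for all `s < s₁`. -/
theorem mgf_analytic_extension
    (μ : Measure ℝ) (hμ : IsProbabilityMeasure μ) (hsupp : ∀ᵐ x ∂μ, 0 ≤ x)
    (s₀ s₁ : ℝ) (hs₀ : 0 ≤ s₀) (hs : s₀ < s₁)
    (h : ℝ → ℝ) (hh : AnalyticOnNhd ℝ h (Set.Iio s₁))
    (heq : ∀ s : ℝ, s < s₀ →
      Integrable (fun x => Real.exp (s * x)) μ ∧ ∫ x, Real.exp (s * x) ∂μ = h s) :
    ∀ s : ℝ, s < s₁ →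
      Integrable (fun x => Real.exp (s * x)) μ ∧ ∫ x, Real.exp (s * x) ∂μ = h s := by
  set S : Set ℝ := {t : ℝ | t ≤ s₁ ∧ ∀ s : ℝ, s < t →
    Integrable (fun x => Real.exp (s * x)) μ ∧ ∫ x, Real.exp (s * x) ∂μ = h s} with hSdef
  have hs₀S : s₀ ∈ S := ⟨hs.le, heq⟩
  have hne : S.Nonempty := ⟨s₀, hs₀S⟩
  have hbdd : BddAbove S := ⟨s₁, fun t ht => ht.1⟩
  have hσ_le : sSup S ≤ s₁ := csSup_le hne fun t ht => ht.1
  have hσP : ∀ s : ℝ, s < sSup S →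
      Integrable (fun x => Real.exp (s * x)) μ ∧ ∫ x, Real.exp (s * x) ∂μ = h s := by
    intro s hs'
    obtain ⟨u, huS, hsu⟩ := exists_lt_of_lt_csSup hne hs'
    exact huS.2 s hsu
  rcases eq_or_lt_of_le hσ_le with heqσ | hlt
  · intro s hs'
    exact hσP s (by rw [heqσ]; exact hs')
  exfalso
  set σ := sSup S with hσdef
  -- analyticity at σ
  obtain ⟨p, hp⟩ := hh σ hlt
  obtain ⟨rp, hball0⟩ := hp
  obtain ⟨r', hr'0, hr'lt⟩ := ENNReal.lt_iff_exists_nnreal_btwn.mp hball0.r_pos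
  set ε : ℝ := (r' : ℝ) with hεdef
  have hε : 0 < ε := by exact_mod_cast hr'0
  have hball : HasFPowerSeriesOnBall h p σ (r' : ℝ≥0∞) := hball0.mono hr'0 hr'lt.le
  set t : ℝ := σ - ε / 4 with htdef
  have htσ : t < σ := by rw [htdef]; linarith
  have hu1 : t < σ - ε / 8 := by rw [htdef]; linarith
  have hu2 : σ - ε / 8 < σ := by linarith
  have hLu : (∫⁻ x, ENNReal.ofReal (Real.exp ((σ - ε / 8) * x)) ∂μ) ≠ ⊤ :=
    (integrable_exp_iff μ _).1 (hσP _ hu2).1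
  have hBfin : ∀ n : ℕ, (∫⁻ x, ENNReal.ofReal (x ^ n * Real.exp (t * x)) ∂μ) ≠ ⊤ :=
    fun n => moment_lintegral_lt_top μ hsupp hu1 hLu n
  set c : ℕ → ℝ :=
    fun n => (∫⁻ x, ENNReal.ofReal (x ^ n * Real.exp (t * x)) ∂μ).toReal / n.factorial with hcdef
  have hc0 : ∀ n, 0 ≤ c n := fun n => div_nonneg ENNReal.toReal_nonneg (Nat.cast_nonneg _)
  have claimA : ∀ s : ℝ, t ≤ s → (∫⁻ x, ENNReal.ofReal (Real.exp (s * x)) ∂μ)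
      = ∑' n : ℕ, ENNReal.ofReal (c n * (s - t) ^ n) :=
    fun s hts => key2 μ hsupp hts hBfin
  have hmid : ∀ s : ℝ, t < s → s < σ →
      Summable (fun n => c n * (s - t) ^ n) ∧ (∑' n : ℕ, c n * (s - t) ^ n) = h s := by
    intro s h1 h2
    obtain ⟨hint, hval⟩ := hσP s h2
    have hLs := (integrable_exp_iff μ s).1 hint
    rw [claimA s h1.le] at hLs
    have hnn : ∀ n, 0 ≤ c n * (s - t) ^ n :=
      fun n => mul_nonneg (hc0 n) (pow_nonneg (by linarith) n)
    refine ⟨summable_of_tsum_ofReal_ne_top hnn hLs, ?_⟩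
    rw [tsum_eq_toReal_tsum_ofReal hnn, ← claimA s h1.le, ← integral_exp_eq μ s, hval]
  have hsumy : ∀ y : ℝ, |y| < ε / 4 → Summable (fun n => c n * y ^ n) := by
    intro y hy
    set R : ℝ := (|y| + ε / 4) / 2 with hRdef
    have hay : 0 ≤ |y| := abs_nonneg y
    have hR1 : |y| < R := by rw [hRdef]; linarith
    have hR2 : R < ε / 4 := by rw [hRdef]; linarith
    have h1 : t < t + R := by linarith
    have h2 : t + R < σ := by rw [htdef]; linarith
    have hs' := (hmid (t + R) h1 h2).1
    rw [show (t + R) - t = R by ring] at hs'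
    refine Summable.of_norm_bounded hs' fun n => ?_
    calc ‖c n * y ^ n‖ = c n * |y| ^ n := by
          rw [norm_mul, Real.norm_eq_abs, Real.norm_eq_abs, abs_of_nonneg (hc0 n), abs_pow]
      _ ≤ c n * R ^ n := mul_le_mul_of_nonneg_left (pow_le_pow_left₀ hay hR1.le n) (hc0 n)
  set cs := FormalMultilinearSeries.ofScalars ℝ c with hcsdef
  have hcsnorm : ∀ n, ‖cs n‖ = c n := fun n => by
    rw [hcsdef, FormalMultilinearSeries.ofScalars_norm]; exact abs_of_nonneg (hc0 n)
  have hrad : ENNReal.ofReal (ε / 4) ≤ cs.radius := by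
    refine ENNReal.le_of_forall_nnreal_lt fun R hR => ?_
    rw [← ENNReal.ofReal_coe_nnreal] at hR
    have hR' : (R : ℝ) < ε / 4 := (ENNReal.ofReal_lt_ofReal_iff (by linarith)).1 hR
    refine FormalMultilinearSeries.le_radius_of_summable _ ?_
    refine (hsumy (R : ℝ) (by rwa [abs_of_nonneg R.coe_nonneg])).congr fun n => ?_
    rw [hcsnorm]
  set g : ℝ → ℝ := fun s => ∑' n : ℕ, c n * (s - t) ^ n with hgdef
  have hgball : HasFPowerSeriesOnBall g cs t (ENNReal.ofReal (ε / 4)) := by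
    refine ⟨hrad, ENNReal.ofReal_pos.2 (by linarith), ?_⟩
    intro y hy
    rw [mem_emetric_ball_zero_iff, Real.enorm_eq_ofReal_abs] at hy
    have hy' : |y| < ε / 4 := (ENNReal.ofReal_lt_ofReal_iff (by linarith)).1 hy
    have hsum := hsumy y hy'
    have h1 : (fun n : ℕ => cs n fun _ => y) = fun n => c n * y ^ n := by
      funext n
      rw [hcsdef, FormalMultilinearSeries.ofScalars_apply_eq, smul_eq_mul]
    have h2 : g (t + y) = ∑' n : ℕ, c n * y ^ n := by
      rw [hgdef]; simp
    rw [h1, h2]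
    exact hsum.hasSum
  have hUg : AnalyticOnNhd ℝ g (Set.Ioo (t - ε / 4) (t + ε / 4)) := by
    intro z hz
    refine hgball.analyticAt_of_mem ?_
    rw [Metric.emetric_ball, Real.ball_eq_Ioo]
    exact hz
  have hUh : AnalyticOnNhd ℝ h (Set.Ioo (t - ε / 4) (t + ε / 4)) := by
    intro z hz
    refine hh z (Set.mem_Iio.2 ?_)
    have := hz.2
    rw [htdef] at this
    linarith
  have hz₀mem : (σ - ε / 8) ∈ Set.Ioo (t - ε / 4) (t + ε / 4) := by
    constructor <;> (rw [htdef]; linarith)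
  have hev : h =ᶠ[nhds (σ - ε / 8)] g := by
    refine Filter.eventually_of_mem (isOpen_Ioo.mem_nhds (⟨hu1, hu2⟩ : σ - ε / 8 ∈ Set.Ioo t σ))
      fun s hs' => ?_
    exact ((hmid s hs'.1 hs'.2).2).symm
  have hEqOn : Set.EqOn h g (Set.Ioo (t - ε / 4) (t + ε / 4)) :=
    hUh.eqOn_of_preconnected_of_eventuallyEq hUg isPreconnected_Ioo hz₀mem hev
  have hter : g =ᶠ[nhds t] h := by
    refine Filter.eventually_of_mem
      (isOpen_Ioo.mem_nhds (⟨by linarith, by linarith⟩ : t ∈ Set.Ioo (t - ε / 4) (t + ε / 4)))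
      fun s hs' => (hEqOn hs').symm
  have hcs_at : HasFPowerSeriesAt h cs t := hgball.hasFPowerSeriesAt.congr hter
  have hnormtσ : (‖t - σ‖₊ : ℝ≥0∞) = ENNReal.ofReal (ε / 4) := by
    rw [← enorm_eq_nnnorm, Real.enorm_eq_ofReal_abs]
    congr 1
    rw [htdef, show σ - ε / 4 - σ = -(ε / 4) by ring, abs_neg, abs_of_nonneg (by linarith)]
  have hlt2 : (‖t - σ‖₊ : ℝ≥0∞) < (r' : ℝ≥0∞) := by
    rw [hnormtσ, ← ENNReal.ofReal_coe_nnreal]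
    exact (ENNReal.ofReal_lt_ofReal_iff (by rw [← hεdef]; linarith)).2 (by rw [← hεdef]; linarith)
  have hq := hball.changeOrigin hlt2
  rw [show σ + (t - σ) = t by ring] at hq
  have hq_at : HasFPowerSeriesAt h (p.changeOrigin (t - σ)) t := hq.hasFPowerSeriesAt
  have hcsq : cs = p.changeOrigin (t - σ) := hcs_at.eq_formalMultilinearSeries hq_at
  have hradeq : (r' : ℝ≥0∞) - ‖t - σ‖₊ = ENNReal.ofReal (3 * ε / 4) := by
    rw [hnormtσ, ← ENNReal.ofReal_coe_nnreal, ← hεdef,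
      ← ENNReal.ofReal_sub ε (by linarith : (0:ℝ) ≤ ε / 4)]
    congr 1
    ring
  have hsumhalf : Summable (fun n => c n * (ε / 2) ^ n) := by
    have h1 : (ENNReal.ofReal (ε / 2)) < cs.radius := by
      have ha : ENNReal.ofReal (ε / 2) < ENNReal.ofReal (3 * ε / 4) :=
        (ENNReal.ofReal_lt_ofReal_iff (by linarith)).2 (by linarith)
      have hb : ENNReal.ofReal (3 * ε / 4) ≤ cs.radius := by
        rw [← hradeq, hcsq]
        exact hq.r_le
      exact lt_of_lt_of_le ha hb
    have h2 := cs.summable_norm_mul_pow (r := Real.toNNReal (ε / 2))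
      (by rwa [← ENNReal.ofReal_coe_nnreal, Real.coe_toNNReal _ (by linarith : (0:ℝ) ≤ ε / 2)])
    refine h2.congr fun n => ?_
    rw [hcsnorm, Real.coe_toNNReal _ (by linarith : (0:ℝ) ≤ ε / 2)]
  have hq3 : ∀ y : ℝ, |y| < 3 * ε / 4 → HasSum (fun n => c n * y ^ n) (h (t + y)) := by
    intro y hy
    have hmem : y ∈ Metric.eball (0 : ℝ) ((r' : ℝ≥0∞) - ‖t - σ‖₊) := by
      rw [mem_emetric_ball_zero_iff, Real.enorm_eq_ofReal_abs, hradeq]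
      exact (ENNReal.ofReal_lt_ofReal_iff (by linarith)).2 hy
    have hHS := hq.hasSum hmem
    rw [← hcsq] at hHS
    have h1 : (fun n : ℕ => cs n fun _ => y) = fun n => c n * y ^ n := by
      funext n
      rw [hcsdef, FormalMultilinearSeries.ofScalars_apply_eq, smul_eq_mul]
    rwa [h1] at hHS
  -- final contradiction
  have hσ'S : min (σ + ε / 4) s₁ ∈ S := by
    refine ⟨min_le_right _ _, fun s hs' => ?_⟩
    rcases lt_or_ge s σ with hcase | hcase
    · exact hσP s hcase
    · have h1 : t ≤ s := le_trans htσ.le hcase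
      have h2 : s - t < ε / 2 := by
        have h3 : s < σ + ε / 4 := lt_of_lt_of_le hs' (min_le_left _ _)
        rw [htdef]
        linarith
      have h0st : 0 ≤ s - t := by linarith
      have hnn : ∀ n, 0 ≤ c n * (s - t) ^ n :=
        fun n => mul_nonneg (hc0 n) (pow_nonneg h0st n)
      have hsum_s : Summable (fun n => c n * (s - t) ^ n) :=
        Summable.of_nonneg_of_le hnn
          (fun n => mul_le_mul_of_nonneg_left (pow_le_pow_left₀ h0st h2.le n) (hc0 n)) hsumhalf
      have hLs : (∫⁻ x, ENNReal.ofReal (Real.exp (s * x)) ∂μ)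
          = ENNReal.ofReal (∑' n : ℕ, c n * (s - t) ^ n) := by
        rw [claimA s h1, ← ENNReal.ofReal_tsum_of_nonneg hnn hsum_s]
      have hint : Integrable (fun x => Real.exp (s * x)) μ :=
        (integrable_exp_iff μ s).2 (by rw [hLs]; exact ENNReal.ofReal_ne_top)
      refine ⟨hint, ?_⟩
      have hval : ∫ x, Real.exp (s * x) ∂μ = ∑' n : ℕ, c n * (s - t) ^ n := by
        rw [integral_exp_eq μ s, hLs, ENNReal.toReal_ofReal (tsum_nonneg hnn)]
      rw [hval]
      have hHS := hq3 (s - t) (by rw [abs_of_nonneg h0st]; linarith)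
      rw [show t + (s - t) = s by ring] at hHS
      exact hHS.tsum_eq
  have hc1 : min (σ + ε / 4) s₁ ≤ σ := le_csSup hbdd hσ'S
  have hc2 : σ < min (σ + ε / 4) s₁ := lt_min (by linarith) hlt
  linarith
end
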